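/- Let f₁(x,y) = x² + Σ_{i+j=3} a_{ij} x^i y^j and f₂(x,y) = y² + Σ_{i+j=3} b_{ij} x^i y^j be real polynomials. Then the map germ (x,y) ↦ (x + ½(−a₃₀+b₁₂)z − ½a₁₂w, y − ½b₂₁z + ½(a₂₁−b₀₃)w, z, w)/(1 + b₁₂x + a₂₁y) evaluated at (z,w) = (f₁(x,y), f₂(x,y)) has its first two components X, Y and last two components Z, W satisfying Z ≡ X² + a₀₃Y³ and W ≡ Y² + b₃₀X³ modulo terms of total degree ≥ 4 in (x,y). Equivalently, the 3-jet of any Monge form with 2-jet (x²,y²) is projectively equivalent to (x² + a₀₃y³, y² + b₃₀x³). -/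

import Mathlib

open Filter Asymptotics Topology

private lemma norm4_littleo : (fun v : ℝ × ℝ => ‖v‖ ^ 4) =o[𝓝 (0 : ℝ × ℝ)] fun v => ‖v‖ ^ 3 := by
  rw [Asymptotics.isLittleO_iff]
  intro c hc
  filter_upwards [Metric.ball_mem_nhds (0 : ℝ × ℝ) hc] with v hv
  have hv' : ‖v‖ < c := by simpa [Metric.mem_ball] using hv
  have h0 : (0 : ℝ) ≤ ‖v‖ := norm_nonneg v
  have h1 : ‖v‖ ^ 4 ≤ c * ‖v‖ ^ 3 := by nlinarith [pow_nonneg h0 3, pow_nonneg h0 2]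
  simpa [Real.norm_eq_abs, abs_of_nonneg (pow_nonneg h0 4), abs_of_nonneg (pow_nonneg h0 3)]
    using h1

private lemma normpow_bigO (k m : ℕ) (h : m ≤ k) :
    (fun v : ℝ × ℝ => ‖v‖ ^ k) =O[𝓝 (0 : ℝ × ℝ)] fun v => ‖v‖ ^ m := by
  rw [Asymptotics.isBigO_iff]
  refine ⟨1, ?_⟩
  filter_upwards [Metric.closedBall_mem_nhds (0 : ℝ × ℝ) one_pos] with v hv
  have hv1 : ‖v‖ ≤ 1 := by simpa [Metric.mem_closedBall] using hv
  have h0 : (0 : ℝ) ≤ ‖v‖ := norm_nonneg v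
  have : ‖v‖ ^ k ≤ ‖v‖ ^ m := pow_le_pow_of_le_one h0 hv1 h
  simpa [Real.norm_eq_abs, abs_of_nonneg (pow_nonneg h0 k), abs_of_nonneg (pow_nonneg h0 m)]
    using this

private lemma mul_o1 {A B : ℝ × ℝ → ℝ}
    (hA : A =O[𝓝 (0 : ℝ × ℝ)] fun v => ‖v‖) (hB : B =O[𝓝 (0 : ℝ × ℝ)] fun v => ‖v‖) :
    (fun v => A v * B v) =O[𝓝 (0 : ℝ × ℝ)] fun v => ‖v‖ ^ 2 := by
  have h := hA.mul hB
  have h2 : (fun v : ℝ × ℝ => ‖v‖ * ‖v‖) = fun v => ‖v‖ ^ 2 := funext fun v => (pow_two _).symm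
  rwa [h2] at h

private lemma prod_o (A B C : ℝ × ℝ → ℝ)
    (hA : A =O[𝓝 (0 : ℝ × ℝ)] fun v => ‖v‖ ^ 2)
    (hB : B =O[𝓝 (0 : ℝ × ℝ)] fun v => ‖v‖ ^ 2)
    (hC : ContinuousAt C 0) :
    (fun v => A v * B v * C v) =o[𝓝 (0 : ℝ × ℝ)] fun v => ‖v‖ ^ 3 := by
  have h := (hA.mul hB).mul (Filter.Tendsto.isBigO_one ℝ hC)
  have h2 : (fun v : ℝ × ℝ => ‖v‖ ^ 2 * ‖v‖ ^ 2 * 1) = fun v => ‖v‖ ^ 4 := by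
    funext v; ring
  rw [h2] at h
  exact h.trans_isLittleO norm4_littleo

private lemma quot {g q1 q2 p c3 c21 c12 c03 n : ℝ} (hp : p ≠ 0)
    (h : n = g * p ^ 2 - (q1 ^ 2 * p + c3 * q1 ^ 3 + c21 * q1 ^ 2 * q2
      + c12 * q1 * q2 ^ 2 + c03 * q2 ^ 3)) :
    n / p ^ 3 = g / p - ((q1 / p) ^ 2 + c3 * (q1 / p) ^ 3 + c21 * (q1 / p) ^ 2 * (q2 / p)
      + c12 * (q1 / p) * (q2 / p) ^ 2 + c03 * (q2 / p) ^ 3) := by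
  subst h
  field_simp

private lemma quot2 {g q1 q2 p c3 c21 c12 c03 n : ℝ} (hp : p ≠ 0)
    (h : n = g * p ^ 2 - (q2 ^ 2 * p + c3 * q1 ^ 3 + c21 * q1 ^ 2 * q2
      + c12 * q1 * q2 ^ 2 + c03 * q2 ^ 3)) :
    n / p ^ 3 = g / p - ((q2 / p) ^ 2 + c3 * (q1 / p) ^ 3 + c21 * (q1 / p) ^ 2 * (q2 / p)
      + c12 * (q1 / p) * (q2 / p) ^ 2 + c03 * (q2 / p) ^ 3) := by
  subst h
  field_simp

set_option maxHeartbeats 2000000 in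
private lemma ring_id1 (a30 a21 a12 a03 b30 b21 b12 b03 x y : ℝ) :
    y^2 * (y*(b12*x + a21*y)) * (2*a03) + (x^2 + a03*y^3) * (b12*x + a21*y)^2 * 1 + (x*y) * y^2 * ((a30 - b12)*a03) + x^2 * x^2 * (a12*b30) + ((-a30 + b12)/2 * (x^2 + a03*y^3) - a12/2 * (y^2 + b30*x^3)) * (x*(b12*x + a21*y)) * (-2) + ((-a30 + b12)/2 * (x^2 + a03*y^3) - a12/2 * (y^2 + b30*x^3)) * ((-a30 + b12)/2 * (x^2 + a03*y^3) - a12/2 * (y^2 + b30*x^3)) * (-(1 + b12*x + a21*y)) + x^2 * ((-a30 + b12)/2 * (x^2 + a03*y^3) - a12/2 * (y^2 + b30*x^3)) * (-3*a30) + ((-a30 + b12)/2 * (x^2 + a03*y^3) - a12/2 * (y^2 + b30*x^3)) * ((-a30 + b12)/2 * (x^2 + a03*y^3) - a12/2 * (y^2 + b30*x^3)) * (-3*a30*x) + ((-a30 + b12)/2 * (x^2 + a03*y^3) - a12/2 * (y^2 + b30*x^3)) * ((-a30 + b12)/2 * (x^2 + a03*y^3) - a12/2 * (y^2 + b30*x^3))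 * (-(a30*((-a30 + b12)/2 * (x^2 + a03*y^3) - a12/2 * (y^2 + b30*x^3)))) + x^2 * (-(b21/2) * (x^2 + a03*y^3) + (a21 - b03)/2 * (y^2 + b30*x^3)) * (-a21) + (x*y) * ((-a30 + b12)/2 * (x^2 + a03*y^3) - a12/2 * (y^2 + b30*x^3)) * (-2*a21) + ((-a30 + b12)/2 * (x^2 + a03*y^3) - a12/2 * (y^2 + b30*x^3)) * (-(b21/2) * (x^2 + a03*y^3) + (a21 - b03)/2 * (y^2 + b30*x^3)) * (-2*a21*x) + ((-a30 + b12)/2 * (x^2 + a03*y^3) - a12/2 * (y^2 + b30*x^3)) * ((-a30 + b12)/2 * (x^2 + a03*y^3) - a12/2 * (y^2 + b30*x^3)) * (-(a21*(y + (-(b21/2) * (x^2 + a03*y^3) + (a21 - b03)/2 * (y^2 + b30*x^3))))) + (x*y) * (-(b21/2) * (x^2 + a03*y^3) + (a21 - b03)/2 * (y^2 + b30*x^3)) * (-2*a12) + (-(b21/2) * (x^2 + a03*y^3) + (a21 - b03)/2 * (y^2 + b30*x^3)) * (-(b21/2) * (x^2 + a03*y^3) + (a21 - b03)/2 * (y^2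 + b30*x^3)) * (-(a12*x)) + ((-a30 + b12)/2 * (x^2 + a03*y^3) - a12/2 * (y^2 + b30*x^3)) * (y + (-(b21/2) * (x^2 + a03*y^3) + (a21 - b03)/2 * (y^2 + b30*x^3)))^2 * (-a12) + y^2 * (-(b21/2) * (x^2 + a03*y^3) + (a21 - b03)/2 * (y^2 + b30*x^3)) * (-3*a03) + (-(b21/2) * (x^2 + a03*y^3) + (a21 - b03)/2 * (y^2 + b30*x^3)) * (-(b21/2) * (x^2 + a03*y^3) + (a21 - b03)/2 * (y^2 + b30*x^3)) * (-3*a03*y) + (-(b21/2) * (x^2 + a03*y^3) + (a21 - b03)/2 * (y^2 + b30*x^3)) * (-(b21/2) * (x^2 + a03*y^3) + (a21 - b03)/2 * (y^2 + b30*x^3)) * (-(a03*(-(b21/2) * (x^2 + a03*y^3) + (a21 - b03)/2 * (y^2 + b30*x^3))))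
    = (x^2 + a03*y^3) * (1 + b12*x + a21*y)^2 - ((x + (-a30 + b12)/2 * (x^2 + a03*y^3) - a12/2 * (y^2 + b30*x^3))^2 * (1 + b12*x + a21*y) + a30*(x + (-a30 + b12)/2 * (x^2 + a03*y^3) - a12/2 * (y^2 + b30*x^3))^3 + a21*(x + (-a30 + b12)/2 * (x^2 + a03*y^3) - a12/2 * (y^2 + b30*x^3))^2*(y - b21/2 * (x^2 + a03*y^3) + (a21 - b03)/2 * (y^2 + b30*x^3)) + a12*(x + (-a30 + b12)/2 * (x^2 + a03*y^3) - a12/2 * (y^2 + b30*x^3))*(y - b21/2 * (x^2 + a03*y^3) + (a21 - b03)/2 * (y^2 + b30*x^3))^2 + a03*(y - b21/2 * (x^2 + a03*y^3) + (a21 - b03)/2 * (y^2 + b30*x^3))^3) := by ring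

set_option maxHeartbeats 2000000 in
private lemma ring_id2 (a30 a21 a12 a03 b30 b21 b12 b03 x y : ℝ) :
    x^2 * (x*(b12*x + a21*y)) * (2*b30) + (y^2 + b30*x^3) * (b12*x + a21*y)^2 * 1 + y^2 * y^2 * (b21*a03) + x^2 * (x*y) * (-((a21 - b03)*b30)) + (-(b21/2) * (x^2 + a03*y^3) + (a21 - b03)/2 * (y^2 + b30*x^3)) * (y*(b12*x + a21*y)) * (-2) + (-(b21/2) * (x^2 + a03*y^3) + (a21 - b03)/2 * (y^2 + b30*x^3)) * (-(b21/2) * (x^2 + a03*y^3) + (a21 - b03)/2 * (y^2 + b30*x^3)) * (-(1 + b12*x + a21*y)) + x^2 * ((-a30 + b12)/2 * (x^2 + a03*y^3) - a12/2 * (y^2 + b30*x^3)) * (-3*b30) + ((-a30 + b12)/2 * (x^2 + a03*y^3) - a12/2 * (y^2 + b30*x^3)) * ((-a30 + b12)/2 * (x^2 + a03*y^3) - a12/2 * (y^2 + b30*x^3)) * (-3*b30*x) + ((-a30 + b12)/2 * (x^2 + a03*y^3) - a12/2 * (y^2 + b30*x^3)) * ((-a30 + b12)/2 * (x^2 + a03*y^3)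 - a12/2 * (y^2 + b30*x^3)) * (-(b30*((-a30 + b12)/2 * (x^2 + a03*y^3) - a12/2 * (y^2 + b30*x^3)))) + x^2 * (-(b21/2) * (x^2 + a03*y^3) + (a21 - b03)/2 * (y^2 + b30*x^3)) * (-b21) + (x*y) * ((-a30 + b12)/2 * (x^2 + a03*y^3) - a12/2 * (y^2 + b30*x^3)) * (-2*b21) + ((-a30 + b12)/2 * (x^2 + a03*y^3) - a12/2 * (y^2 + b30*x^3)) * (-(b21/2) * (x^2 + a03*y^3) + (a21 - b03)/2 * (y^2 + b30*x^3)) * (-2*b21*x) + ((-a30 + b12)/2 * (x^2 + a03*y^3) - a12/2 * (y^2 + b30*x^3)) * ((-a30 + b12)/2 * (x^2 + a03*y^3) - a12/2 * (y^2 + b30*x^3)) * (-(b21*(y + (-(b21/2) * (x^2 + a03*y^3) + (a21 - b03)/2 * (y^2 + b30*x^3))))) + (x*y) * (-(b21/2) * (x^2 + a03*y^3) + (a21 - b03)/2 * (y^2 + b30*x^3)) * (-2*b12) + (-(b21/2) * (x^2 + a03*y^3) + (a21 - b03)/2 * (y^2 + b30*x^3)) * (-(b21/2) * (x^2 + a03*y^3)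 + (a21 - b03)/2 * (y^2 + b30*x^3)) * (-(b12*x)) + ((-a30 + b12)/2 * (x^2 + a03*y^3) - a12/2 * (y^2 + b30*x^3)) * (y + (-(b21/2) * (x^2 + a03*y^3) + (a21 - b03)/2 * (y^2 + b30*x^3)))^2 * (-b12) + y^2 * (-(b21/2) * (x^2 + a03*y^3) + (a21 - b03)/2 * (y^2 + b30*x^3)) * (-3*b03) + (-(b21/2) * (x^2 + a03*y^3) + (a21 - b03)/2 * (y^2 + b30*x^3)) * (-(b21/2) * (x^2 + a03*y^3) + (a21 - b03)/2 * (y^2 + b30*x^3)) * (-3*b03*y) + (-(b21/2) * (x^2 + a03*y^3) + (a21 - b03)/2 * (y^2 + b30*x^3)) * (-(b21/2) * (x^2 + a03*y^3) + (a21 - b03)/2 * (y^2 + b30*x^3)) * (-(b03*(-(b21/2) * (x^2 + a03*y^3) + (a21 - b03)/2 * (y^2 + b30*x^3))))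
    = (y^2 + b30*x^3) * (1 + b12*x + a21*y)^2 - ((y - b21/2 * (x^2 + a03*y^3) + (a21 - b03)/2 * (y^2 + b30*x^3))^2 * (1 + b12*x + a21*y) + b30*(x + (-a30 + b12)/2 * (x^2 + a03*y^3) - a12/2 * (y^2 + b30*x^3))^3 + b21*(x + (-a30 + b12)/2 * (x^2 + a03*y^3) - a12/2 * (y^2 + b30*x^3))^2*(y - b21/2 * (x^2 + a03*y^3) + (a21 - b03)/2 * (y^2 + b30*x^3)) + b12*(x + (-a30 + b12)/2 * (x^2 + a03*y^3) - a12/2 * (y^2 + b30*x^3))*(y - b21/2 * (x^2 + a03*y^3) + (a21 - b03)/2 * (y^2 + b30*x^3))^2 + b03*(y - b21/2 * (x^2 + a03*y^3) + (a21 - b03)/2 * (y^2 + b30*x^3))^3) := by ring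

set_option maxHeartbeats 1000000 in
/-- The 3-jet of a Monge form with 2-jet `(x², y²)` is projectively equivalent to
`(x² + a₀₃y³, y² + b₃₀x³)` via the explicit projective transformation with
`q₁ = x + ½(−a₃₀+b₁₂)z − ½a₁₂w`, `q₂ = y − ½b₂₁z + ½(a₂₁−b₀₃)w`, `q₃ = z`, `q₄ = w`,
`p = 1 + b₁₂x + a₂₁y`: along the graph `(x, y, g₁, g₂)` of the normal form the defining
functions `q₃/p − f₁(q₁/p, q₂/p)` and `q₄/p − f₂(q₁/p, q₂/p)` vanish modulo degree ≥ 4. -/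
theorem jet3_hyperbolic_normal_form
    (a30 a21 a12 a03 b30 b21 b12 b03 : ℝ)
    (f₁ f₂ g₁ g₂ P Q₁ Q₂ : ℝ × ℝ → ℝ)
    (hf₁ : f₁ = fun v => v.1 ^ 2 + a30 * v.1 ^ 3 + a21 * v.1 ^ 2 * v.2
      + a12 * v.1 * v.2 ^ 2 + a03 * v.2 ^ 3)
    (hf₂ : f₂ = fun v => v.2 ^ 2 + b30 * v.1 ^ 3 + b21 * v.1 ^ 2 * v.2
      + b12 * v.1 * v.2 ^ 2 + b03 * v.2 ^ 3)
    (hg₁ : g₁ = fun v => v.1 ^ 2 + a03 * v.2 ^ 3)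
    (hg₂ : g₂ = fun v => v.2 ^ 2 + b30 * v.1 ^ 3)
    (hP : P = fun v => 1 + b12 * v.1 + a21 * v.2)
    (hQ₁ : Q₁ = fun v => v.1 + (-a30 + b12) / 2 * g₁ v - a12 / 2 * g₂ v)
    (hQ₂ : Q₂ = fun v => v.2 - b21 / 2 * g₁ v + (a21 - b03) / 2 * g₂ v) :
    ((fun v : ℝ × ℝ => g₁ v / P v - f₁ (Q₁ v / P v, Q₂ v / P v))
        =o[𝓝 (0 : ℝ × ℝ)] fun v => ‖v‖ ^ 3) ∧
    ((fun v : ℝ × ℝ => g₂ v / P v - f₂ (Q₁ v / P v, Q₂ v / P v))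
        =o[𝓝 (0 : ℝ × ℝ)] fun v => ‖v‖ ^ 3) := by
  subst hf₁ hf₂ hg₁ hg₂ hP hQ₁ hQ₂
  have hPne0 : ((1 : ℝ) + b12 * (0 : ℝ × ℝ).1 + a21 * (0 : ℝ × ℝ).2) ^ 3 ≠ 0 := by norm_num
  have hPc : ContinuousAt (fun v : ℝ × ℝ => 1 + b12 * v.1 + a21 * v.2) 0 := by fun_prop
  have hne : ∀ᶠ v in 𝓝 (0 : ℝ × ℝ), 1 + b12 * v.1 + a21 * v.2 ≠ 0 :=
    hPc.eventually_ne (by norm_num)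
  have hn1 : (fun v : ℝ × ℝ => v.1) =O[𝓝 (0 : ℝ × ℝ)] fun v => ‖v‖ :=
    Asymptotics.isBigO_of_le _ fun v => by simpa using norm_fst_le v
  have hn2 : (fun v : ℝ × ℝ => v.2) =O[𝓝 (0 : ℝ × ℝ)] fun v => ‖v‖ :=
    Asymptotics.isBigO_of_le _ fun v => by simpa using norm_snd_le v
  have hLo : (fun v : ℝ × ℝ => b12 * v.1 + a21 * v.2) =O[𝓝 (0 : ℝ × ℝ)] fun v => ‖v‖ :=
    (hn1.const_mul_left b12).add (hn2.const_mul_left a21)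
  have hx2 : (fun v : ℝ × ℝ => v.1 ^ 2) =O[𝓝 (0 : ℝ × ℝ)] fun v => ‖v‖ ^ 2 := by
    simpa only [← pow_two] using mul_o1 hn1 hn1
  have hy2 : (fun v : ℝ × ℝ => v.2 ^ 2) =O[𝓝 (0 : ℝ × ℝ)] fun v => ‖v‖ ^ 2 := by
    simpa only [← pow_two] using mul_o1 hn2 hn2
  have hxy : (fun v : ℝ × ℝ => v.1 * v.2) =O[𝓝 (0 : ℝ × ℝ)] fun v => ‖v‖ ^ 2 :=
    mul_o1 hn1 hn2
  have hxL : (fun v : ℝ × ℝ => v.1 * (b12 * v.1 + a21 * v.2)) =O[𝓝 (0 : ℝ × ℝ)]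
      fun v => ‖v‖ ^ 2 := mul_o1 hn1 hLo
  have hyL : (fun v : ℝ × ℝ => v.2 * (b12 * v.1 + a21 * v.2)) =O[𝓝 (0 : ℝ × ℝ)]
      fun v => ‖v‖ ^ 2 := mul_o1 hn2 hLo
  have hL2 : (fun v : ℝ × ℝ => (b12 * v.1 + a21 * v.2) ^ 2) =O[𝓝 (0 : ℝ × ℝ)]
      fun v => ‖v‖ ^ 2 := by simpa only [← pow_two] using mul_o1 hLo hLo
  have h32 : (fun v : ℝ × ℝ => ‖v‖ ^ 3) =O[𝓝 (0 : ℝ × ℝ)] fun v => ‖v‖ ^ 2 :=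
    normpow_bigO 3 2 (by norm_num)
  have h21 : (fun v : ℝ × ℝ => ‖v‖ ^ 2) =O[𝓝 (0 : ℝ × ℝ)] fun v => ‖v‖ := by
    have h := normpow_bigO 2 1 (by norm_num)
    simpa only [pow_one] using h
  have hy3 : (fun v : ℝ × ℝ => v.2 ^ 3) =O[𝓝 (0 : ℝ × ℝ)] fun v => ‖v‖ ^ 3 :=
    Asymptotics.isBigO_of_le _ fun v => by
      simp only [norm_pow, norm_norm]
      exact pow_le_pow_left₀ (norm_nonneg _) (norm_snd_le v) 3
  have hx3 : (fun v : ℝ × ℝ => v.1 ^ 3) =O[𝓝 (0 : ℝ × ℝ)] fun v => ‖v‖ ^ 3 :=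
    Asymptotics.isBigO_of_le _ fun v => by
      simp only [norm_pow, norm_norm]
      exact pow_le_pow_left₀ (norm_nonneg _) (norm_fst_le v) 3
  have hG1 : (fun v : ℝ × ℝ => v.1 ^ 2 + a03 * v.2 ^ 3) =O[𝓝 (0 : ℝ × ℝ)]
      fun v => ‖v‖ ^ 2 := hx2.add ((hy3.trans h32).const_mul_left a03)
  have hG2 : (fun v : ℝ × ℝ => v.2 ^ 2 + b30 * v.1 ^ 3) =O[𝓝 (0 : ℝ × ℝ)]
      fun v => ‖v‖ ^ 2 := hy2.add ((hx3.trans h32).const_mul_left b30)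
  have hE1 : (fun v : ℝ × ℝ => (-a30 + b12) / 2 * (v.1 ^ 2 + a03 * v.2 ^ 3)
      - a12 / 2 * (v.2 ^ 2 + b30 * v.1 ^ 3)) =O[𝓝 (0 : ℝ × ℝ)] fun v => ‖v‖ ^ 2 :=
    (hG1.const_mul_left ((-a30 + b12) / 2)).sub (hG2.const_mul_left (a12 / 2))
  have hE2 : (fun v : ℝ × ℝ => -(b21 / 2) * (v.1 ^ 2 + a03 * v.2 ^ 3)
      + (a21 - b03) / 2 * (v.2 ^ 2 + b30 * v.1 ^ 3)) =O[𝓝 (0 : ℝ × ℝ)] fun v => ‖v‖ ^ 2 :=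
    (hG1.const_mul_left (-(b21 / 2))).add (hG2.const_mul_left ((a21 - b03) / 2))
  have hYE2 : (fun v : ℝ × ℝ => (v.2 + (-(b21 / 2) * (v.1 ^ 2 + a03 * v.2 ^ 3)
      + (a21 - b03) / 2 * (v.2 ^ 2 + b30 * v.1 ^ 3))) ^ 2) =O[𝓝 (0 : ℝ × ℝ)]
      fun v => ‖v‖ ^ 2 := by
    simpa only [← pow_two] using mul_o1 (hn2.add (hE2.trans h21)) (hn2.add (hE2.trans h21))
  have H1_0 := prod_o (fun v : ℝ × ℝ => v.2^2) (fun v : ℝ × ℝ => (v.2*(b12*v.1 + a21*v.2)))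
    (fun v : ℝ × ℝ => (2*a03) / (1 + b12 * v.1 + a21 * v.2) ^ 3)
    hy2 hyL (ContinuousAt.div (by fun_prop) (by fun_prop) hPne0)
  have H1_1 := prod_o (fun v : ℝ × ℝ => (v.1^2 + a03*v.2^3)) (fun v : ℝ × ℝ => (b12*v.1 + a21*v.2)^2)
    (fun v : ℝ × ℝ => 1 / (1 + b12 * v.1 + a21 * v.2) ^ 3)
    hG1 hL2 (ContinuousAt.div (by fun_prop) (by fun_prop) hPne0)
  have H1_2 := prod_o (fun v : ℝ × ℝ => (v.1*v.2)) (fun v : ℝ × ℝ => v.2^2)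
    (fun v : ℝ × ℝ => ((a30 - b12)*a03) / (1 + b12 * v.1 + a21 * v.2) ^ 3)
    hxy hy2 (ContinuousAt.div (by fun_prop) (by fun_prop) hPne0)
  have H1_3 := prod_o (fun v : ℝ × ℝ => v.1^2) (fun v : ℝ × ℝ => v.1^2)
    (fun v : ℝ × ℝ => (a12*b30) / (1 + b12 * v.1 + a21 * v.2) ^ 3)
    hx2 hx2 (ContinuousAt.div (by fun_prop) (by fun_prop) hPne0)
  have H1_4 := prod_o (fun v : ℝ × ℝ => ((-a30 + b12)/2 * (v.1^2 + a03*v.2^3) - a12/2 * (v.2^2 + b30*v.1^3))) (fun v : ℝ × ℝ => (v.1*(b12*v.1 + a21*v.2)))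
    (fun v : ℝ × ℝ => (-2) / (1 + b12 * v.1 + a21 * v.2) ^ 3)
    hE1 hxL (ContinuousAt.div (by fun_prop) (by fun_prop) hPne0)
  have H1_5 := prod_o (fun v : ℝ × ℝ => ((-a30 + b12)/2 * (v.1^2 + a03*v.2^3) - a12/2 * (v.2^2 + b30*v.1^3))) (fun v : ℝ × ℝ => ((-a30 + b12)/2 * (v.1^2 + a03*v.2^3) - a12/2 * (v.2^2 + b30*v.1^3)))
    (fun v : ℝ × ℝ => (-(1 + b12*v.1 + a21*v.2)) / (1 + b12 * v.1 + a21 * v.2) ^ 3)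
    hE1 hE1 (ContinuousAt.div (by fun_prop) (by fun_prop) hPne0)
  have H1_6 := prod_o (fun v : ℝ × ℝ => v.1^2) (fun v : ℝ × ℝ => ((-a30 + b12)/2 * (v.1^2 + a03*v.2^3) - a12/2 * (v.2^2 + b30*v.1^3)))
    (fun v : ℝ × ℝ => (-3*a30) / (1 + b12 * v.1 + a21 * v.2) ^ 3)
    hx2 hE1 (ContinuousAt.div (by fun_prop) (by fun_prop) hPne0)
  have H1_7 := prod_o (fun v : ℝ × ℝ => ((-a30 + b12)/2 * (v.1^2 + a03*v.2^3) - a12/2 * (v.2^2 + b30*v.1^3))) (fun v : ℝ × ℝ => ((-a30 + b12)/2 * (v.1^2 + a03*v.2^3) - a12/2 * (v.2^2 + b30*v.1^3)))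
    (fun v : ℝ × ℝ => (-3*a30*v.1) / (1 + b12 * v.1 + a21 * v.2) ^ 3)
    hE1 hE1 (ContinuousAt.div (by fun_prop) (by fun_prop) hPne0)
  have H1_8 := prod_o (fun v : ℝ × ℝ => ((-a30 + b12)/2 * (v.1^2 + a03*v.2^3) - a12/2 * (v.2^2 + b30*v.1^3))) (fun v : ℝ × ℝ => ((-a30 + b12)/2 * (v.1^2 + a03*v.2^3) - a12/2 * (v.2^2 + b30*v.1^3)))
    (fun v : ℝ × ℝ => (-(a30*((-a30 + b12)/2 * (v.1^2 + a03*v.2^3) - a12/2 * (v.2^2 + b30*v.1^3)))) / (1 + b12 * v.1 + a21 * v.2) ^ 3)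
    hE1 hE1 (ContinuousAt.div (by fun_prop) (by fun_prop) hPne0)
  have H1_9 := prod_o (fun v : ℝ × ℝ => v.1^2) (fun v : ℝ × ℝ => (-(b21/2) * (v.1^2 + a03*v.2^3) + (a21 - b03)/2 * (v.2^2 + b30*v.1^3)))
    (fun v : ℝ × ℝ => (-a21) / (1 + b12 * v.1 + a21 * v.2) ^ 3)
    hx2 hE2 (ContinuousAt.div (by fun_prop) (by fun_prop) hPne0)
  have H1_10 := prod_o (fun v : ℝ × ℝ => (v.1*v.2)) (fun v : ℝ × ℝ => ((-a30 + b12)/2 * (v.1^2 + a03*v.2^3) - a12/2 * (v.2^2 + b30*v.1^3)))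
    (fun v : ℝ × ℝ => (-2*a21) / (1 + b12 * v.1 + a21 * v.2) ^ 3)
    hxy hE1 (ContinuousAt.div (by fun_prop) (by fun_prop) hPne0)
  have H1_11 := prod_o (fun v : ℝ × ℝ => ((-a30 + b12)/2 * (v.1^2 + a03*v.2^3) - a12/2 * (v.2^2 + b30*v.1^3))) (fun v : ℝ × ℝ => (-(b21/2) * (v.1^2 + a03*v.2^3) + (a21 - b03)/2 * (v.2^2 + b30*v.1^3)))
    (fun v : ℝ × ℝ => (-2*a21*v.1) / (1 + b12 * v.1 + a21 * v.2) ^ 3)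
    hE1 hE2 (ContinuousAt.div (by fun_prop) (by fun_prop) hPne0)
  have H1_12 := prod_o (fun v : ℝ × ℝ => ((-a30 + b12)/2 * (v.1^2 + a03*v.2^3) - a12/2 * (v.2^2 + b30*v.1^3))) (fun v : ℝ × ℝ => ((-a30 + b12)/2 * (v.1^2 + a03*v.2^3) - a12/2 * (v.2^2 + b30*v.1^3)))
    (fun v : ℝ × ℝ => (-(a21*(v.2 + (-(b21/2) * (v.1^2 + a03*v.2^3) + (a21 - b03)/2 * (v.2^2 + b30*v.1^3))))) / (1 + b12 * v.1 + a21 * v.2) ^ 3)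
    hE1 hE1 (ContinuousAt.div (by fun_prop) (by fun_prop) hPne0)
  have H1_13 := prod_o (fun v : ℝ × ℝ => (v.1*v.2)) (fun v : ℝ × ℝ => (-(b21/2) * (v.1^2 + a03*v.2^3) + (a21 - b03)/2 * (v.2^2 + b30*v.1^3)))
    (fun v : ℝ × ℝ => (-2*a12) / (1 + b12 * v.1 + a21 * v.2) ^ 3)
    hxy hE2 (ContinuousAt.div (by fun_prop) (by fun_prop) hPne0)
  have H1_14 := prod_o (fun v : ℝ × ℝ => (-(b21/2) * (v.1^2 + a03*v.2^3) + (a21 - b03)/2 * (v.2^2 + b30*v.1^3))) (fun v : ℝ × ℝ => (-(b21/2) * (v.1^2 + a03*v.2^3) + (a21 - b03)/2 * (v.2^2 + b30*v.1^3)))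
    (fun v : ℝ × ℝ => (-(a12*v.1)) / (1 + b12 * v.1 + a21 * v.2) ^ 3)
    hE2 hE2 (ContinuousAt.div (by fun_prop) (by fun_prop) hPne0)
  have H1_15 := prod_o (fun v : ℝ × ℝ => ((-a30 + b12)/2 * (v.1^2 + a03*v.2^3) - a12/2 * (v.2^2 + b30*v.1^3))) (fun v : ℝ × ℝ => (v.2 + (-(b21/2) * (v.1^2 + a03*v.2^3) + (a21 - b03)/2 * (v.2^2 + b30*v.1^3)))^2)
    (fun v : ℝ × ℝ => (-a12) / (1 + b12 * v.1 + a21 * v.2) ^ 3)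
    hE1 hYE2 (ContinuousAt.div (by fun_prop) (by fun_prop) hPne0)
  have H1_16 := prod_o (fun v : ℝ × ℝ => v.2^2) (fun v : ℝ × ℝ => (-(b21/2) * (v.1^2 + a03*v.2^3) + (a21 - b03)/2 * (v.2^2 + b30*v.1^3)))
    (fun v : ℝ × ℝ => (-3*a03) / (1 + b12 * v.1 + a21 * v.2) ^ 3)
    hy2 hE2 (ContinuousAt.div (by fun_prop) (by fun_prop) hPne0)
  have H1_17 := prod_o (fun v : ℝ × ℝ => (-(b21/2) * (v.1^2 + a03*v.2^3) + (a21 - b03)/2 * (v.2^2 + b30*v.1^3))) (fun v : ℝ × ℝ => (-(b21/2) * (v.1^2 + a03*v.2^3) + (a21 - b03)/2 * (v.2^2 + b30*v.1^3)))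
    (fun v : ℝ × ℝ => (-3*a03*v.2) / (1 + b12 * v.1 + a21 * v.2) ^ 3)
    hE2 hE2 (ContinuousAt.div (by fun_prop) (by fun_prop) hPne0)
  have H1_18 := prod_o (fun v : ℝ × ℝ => (-(b21/2) * (v.1^2 + a03*v.2^3) + (a21 - b03)/2 * (v.2^2 + b30*v.1^3))) (fun v : ℝ × ℝ => (-(b21/2) * (v.1^2 + a03*v.2^3) + (a21 - b03)/2 * (v.2^2 + b30*v.1^3)))
    (fun v : ℝ × ℝ => (-(a03*(-(b21/2) * (v.1^2 + a03*v.2^3) + (a21 - b03)/2 * (v.2^2 + b30*v.1^3)))) / (1 + b12 * v.1 + a21 * v.2) ^ 3)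
    hE2 hE2 (ContinuousAt.div (by fun_prop) (by fun_prop) hPne0)
  have Hsum1 := ((((((((((((((((((H1_0.add H1_1).add H1_2).add H1_3).add H1_4).add H1_5).add H1_6).add H1_7).add H1_8).add H1_9).add H1_10).add H1_11).add H1_12).add H1_13).add H1_14).add H1_15).add H1_16).add H1_17).add H1_18)
  have H2_0 := prod_o (fun v : ℝ × ℝ => v.1^2) (fun v : ℝ × ℝ => (v.1*(b12*v.1 + a21*v.2)))
    (fun v : ℝ × ℝ => (2*b30) / (1 + b12 * v.1 + a21 * v.2) ^ 3)
    hx2 hxL (ContinuousAt.div (by fun_prop) (by fun_prop) hPne0)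
  have H2_1 := prod_o (fun v : ℝ × ℝ => (v.2^2 + b30*v.1^3)) (fun v : ℝ × ℝ => (b12*v.1 + a21*v.2)^2)
    (fun v : ℝ × ℝ => 1 / (1 + b12 * v.1 + a21 * v.2) ^ 3)
    hG2 hL2 (ContinuousAt.div (by fun_prop) (by fun_prop) hPne0)
  have H2_2 := prod_o (fun v : ℝ × ℝ => v.2^2) (fun v : ℝ × ℝ => v.2^2)
    (fun v : ℝ × ℝ => (b21*a03) / (1 + b12 * v.1 + a21 * v.2) ^ 3)
    hy2 hy2 (ContinuousAt.div (by fun_prop) (by fun_prop) hPne0)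
  have H2_3 := prod_o (fun v : ℝ × ℝ => v.1^2) (fun v : ℝ × ℝ => (v.1*v.2))
    (fun v : ℝ × ℝ => (-((a21 - b03)*b30)) / (1 + b12 * v.1 + a21 * v.2) ^ 3)
    hx2 hxy (ContinuousAt.div (by fun_prop) (by fun_prop) hPne0)
  have H2_4 := prod_o (fun v : ℝ × ℝ => (-(b21/2) * (v.1^2 + a03*v.2^3) + (a21 - b03)/2 * (v.2^2 + b30*v.1^3))) (fun v : ℝ × ℝ => (v.2*(b12*v.1 + a21*v.2)))
    (fun v : ℝ × ℝ => (-2) / (1 + b12 * v.1 + a21 * v.2) ^ 3)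
    hE2 hyL (ContinuousAt.div (by fun_prop) (by fun_prop) hPne0)
  have H2_5 := prod_o (fun v : ℝ × ℝ => (-(b21/2) * (v.1^2 + a03*v.2^3) + (a21 - b03)/2 * (v.2^2 + b30*v.1^3))) (fun v : ℝ × ℝ => (-(b21/2) * (v.1^2 + a03*v.2^3) + (a21 - b03)/2 * (v.2^2 + b30*v.1^3)))
    (fun v : ℝ × ℝ => (-(1 + b12*v.1 + a21*v.2)) / (1 + b12 * v.1 + a21 * v.2) ^ 3)
    hE2 hE2 (ContinuousAt.div (by fun_prop) (by fun_prop) hPne0)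
  have H2_6 := prod_o (fun v : ℝ × ℝ => v.1^2) (fun v : ℝ × ℝ => ((-a30 + b12)/2 * (v.1^2 + a03*v.2^3) - a12/2 * (v.2^2 + b30*v.1^3)))
    (fun v : ℝ × ℝ => (-3*b30) / (1 + b12 * v.1 + a21 * v.2) ^ 3)
    hx2 hE1 (ContinuousAt.div (by fun_prop) (by fun_prop) hPne0)
  have H2_7 := prod_o (fun v : ℝ × ℝ => ((-a30 + b12)/2 * (v.1^2 + a03*v.2^3) - a12/2 * (v.2^2 + b30*v.1^3))) (fun v : ℝ × ℝ => ((-a30 + b12)/2 * (v.1^2 + a03*v.2^3) - a12/2 * (v.2^2 + b30*v.1^3)))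
    (fun v : ℝ × ℝ => (-3*b30*v.1) / (1 + b12 * v.1 + a21 * v.2) ^ 3)
    hE1 hE1 (ContinuousAt.div (by fun_prop) (by fun_prop) hPne0)
  have H2_8 := prod_o (fun v : ℝ × ℝ => ((-a30 + b12)/2 * (v.1^2 + a03*v.2^3) - a12/2 * (v.2^2 + b30*v.1^3))) (fun v : ℝ × ℝ => ((-a30 + b12)/2 * (v.1^2 + a03*v.2^3) - a12/2 * (v.2^2 + b30*v.1^3)))
    (fun v : ℝ × ℝ => (-(b30*((-a30 + b12)/2 * (v.1^2 + a03*v.2^3) - a12/2 * (v.2^2 + b30*v.1^3)))) / (1 + b12 * v.1 + a21 * v.2) ^ 3)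
    hE1 hE1 (ContinuousAt.div (by fun_prop) (by fun_prop) hPne0)
  have H2_9 := prod_o (fun v : ℝ × ℝ => v.1^2) (fun v : ℝ × ℝ => (-(b21/2) * (v.1^2 + a03*v.2^3) + (a21 - b03)/2 * (v.2^2 + b30*v.1^3)))
    (fun v : ℝ × ℝ => (-b21) / (1 + b12 * v.1 + a21 * v.2) ^ 3)
    hx2 hE2 (ContinuousAt.div (by fun_prop) (by fun_prop) hPne0)
  have H2_10 := prod_o (fun v : ℝ × ℝ => (v.1*v.2)) (fun v : ℝ × ℝ => ((-a30 + b12)/2 * (v.1^2 + a03*v.2^3) - a12/2 * (v.2^2 + b30*v.1^3)))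
    (fun v : ℝ × ℝ => (-2*b21) / (1 + b12 * v.1 + a21 * v.2) ^ 3)
    hxy hE1 (ContinuousAt.div (by fun_prop) (by fun_prop) hPne0)
  have H2_11 := prod_o (fun v : ℝ × ℝ => ((-a30 + b12)/2 * (v.1^2 + a03*v.2^3) - a12/2 * (v.2^2 + b30*v.1^3))) (fun v : ℝ × ℝ => (-(b21/2) * (v.1^2 + a03*v.2^3) + (a21 - b03)/2 * (v.2^2 + b30*v.1^3)))
    (fun v : ℝ × ℝ => (-2*b21*v.1) / (1 + b12 * v.1 + a21 * v.2) ^ 3)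
    hE1 hE2 (ContinuousAt.div (by fun_prop) (by fun_prop) hPne0)
  have H2_12 := prod_o (fun v : ℝ × ℝ => ((-a30 + b12)/2 * (v.1^2 + a03*v.2^3) - a12/2 * (v.2^2 + b30*v.1^3))) (fun v : ℝ × ℝ => ((-a30 + b12)/2 * (v.1^2 + a03*v.2^3) - a12/2 * (v.2^2 + b30*v.1^3)))
    (fun v : ℝ × ℝ => (-(b21*(v.2 + (-(b21/2) * (v.1^2 + a03*v.2^3) + (a21 - b03)/2 * (v.2^2 + b30*v.1^3))))) / (1 + b12 * v.1 + a21 * v.2) ^ 3)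
    hE1 hE1 (ContinuousAt.div (by fun_prop) (by fun_prop) hPne0)
  have H2_13 := prod_o (fun v : ℝ × ℝ => (v.1*v.2)) (fun v : ℝ × ℝ => (-(b21/2) * (v.1^2 + a03*v.2^3) + (a21 - b03)/2 * (v.2^2 + b30*v.1^3)))
    (fun v : ℝ × ℝ => (-2*b12) / (1 + b12 * v.1 + a21 * v.2) ^ 3)
    hxy hE2 (ContinuousAt.div (by fun_prop) (by fun_prop) hPne0)
  have H2_14 := prod_o (fun v : ℝ × ℝ => (-(b21/2) * (v.1^2 + a03*v.2^3) + (a21 - b03)/2 * (v.2^2 + b30*v.1^3))) (fun v : ℝ × ℝ => (-(b21/2) * (v.1^2 + a03*v.2^3) + (a21 - b03)/2 * (v.2^2 + b30*v.1^3)))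
    (fun v : ℝ × ℝ => (-(b12*v.1)) / (1 + b12 * v.1 + a21 * v.2) ^ 3)
    hE2 hE2 (ContinuousAt.div (by fun_prop) (by fun_prop) hPne0)
  have H2_15 := prod_o (fun v : ℝ × ℝ => ((-a30 + b12)/2 * (v.1^2 + a03*v.2^3) - a12/2 * (v.2^2 + b30*v.1^3))) (fun v : ℝ × ℝ => (v.2 + (-(b21/2) * (v.1^2 + a03*v.2^3) + (a21 - b03)/2 * (v.2^2 + b30*v.1^3)))^2)
    (fun v : ℝ × ℝ => (-b12) / (1 + b12 * v.1 + a21 * v.2) ^ 3)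
    hE1 hYE2 (ContinuousAt.div (by fun_prop) (by fun_prop) hPne0)
  have H2_16 := prod_o (fun v : ℝ × ℝ => v.2^2) (fun v : ℝ × ℝ => (-(b21/2) * (v.1^2 + a03*v.2^3) + (a21 - b03)/2 * (v.2^2 + b30*v.1^3)))
    (fun v : ℝ × ℝ => (-3*b03) / (1 + b12 * v.1 + a21 * v.2) ^ 3)
    hy2 hE2 (ContinuousAt.div (by fun_prop) (by fun_prop) hPne0)
  have H2_17 := prod_o (fun v : ℝ × ℝ => (-(b21/2) * (v.1^2 + a03*v.2^3) + (a21 - b03)/2 * (v.2^2 + b30*v.1^3))) (fun v : ℝ × ℝ => (-(b21/2) * (v.1^2 + a03*v.2^3) + (a21 - b03)/2 * (v.2^2 + b30*v.1^3)))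
    (fun v : ℝ × ℝ => (-3*b03*v.2) / (1 + b12 * v.1 + a21 * v.2) ^ 3)
    hE2 hE2 (ContinuousAt.div (by fun_prop) (by fun_prop) hPne0)
  have H2_18 := prod_o (fun v : ℝ × ℝ => (-(b21/2) * (v.1^2 + a03*v.2^3) + (a21 - b03)/2 * (v.2^2 + b30*v.1^3))) (fun v : ℝ × ℝ => (-(b21/2) * (v.1^2 + a03*v.2^3) + (a21 - b03)/2 * (v.2^2 + b30*v.1^3)))
    (fun v : ℝ × ℝ => (-(b03*(-(b21/2) * (v.1^2 + a03*v.2^3) + (a21 - b03)/2 * (v.2^2 + b30*v.1^3)))) / (1 + b12 * v.1 + a21 * v.2) ^ 3)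
    hE2 hE2 (ContinuousAt.div (by fun_prop) (by fun_prop) hPne0)
  have Hsum2 := ((((((((((((((((((H2_0.add H2_1).add H2_2).add H2_3).add H2_4).add H2_5).add H2_6).add H2_7).add H2_8).add H2_9).add H2_10).add H2_11).add H2_12).add H2_13).add H2_14).add H2_15).add H2_16).add H2_17).add H2_18)
  constructor
  · refine Hsum1.congr' ?_ (Filter.EventuallyEq.refl _ _)
    filter_upwards [hne] with v hv
    conv_lhs => simp only [← mul_div_assoc, ← add_div]
    exact quot hv (ring_id1 a30 a21 a12 a03 b30 b21 b12 b03 v.1 v.2)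
  · refine Hsum2.congr' ?_ (Filter.EventuallyEq.refl _ _)
    filter_upwards [hne] with v hv
    conv_lhs => simp only [← mul_div_assoc, ← add_div]
    exact quot2 hv (ring_id2 a30 a21 a12 a03 b30 b21 b12 b03 v.1 v.2)
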